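/- A permutation τ ∈ S_k is layered if and only if for every j ∈ {1,…,k} the pattern of τ_1…τ_j is an involution in S_j (equivalently, J(τ) = {0,1,…,k}). -/

import Mathlib

open Equiv Finset

/-- The number of involutions in the symmetric group S_n. -/
def numInvolutions (n : ℕ) : ℕ :=
  (Finset.univ.filter fun π : Equiv.Perm (Fin n) => π * π = 1).card

/-- `π ∈ S_n` contains `τ ∈ S_k` as a subsequence. -/
def ContainsSubseq {n k : ℕ} (π : Equiv.Perm (Fin n)) (τ : Equiv.Perm (Fin k)) : Prop :=
  ∃ ι : Fin k → Fin n, StrictMono ι ∧ ∀ m : Fin k, (π (ι m) : ℕ) = (τ m : ℕ)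

/-- `p` is the pattern (order-preserving relabeling) of the word `w`. -/
def IsPattern {j : ℕ} {α : Type*} [LinearOrder α] (w : Fin j → α) (p : Equiv.Perm (Fin j)) : Prop :=
  ∀ a b : Fin j, p a ≤ p b ↔ w a ≤ w b

/-- The pattern of `τ_1 … τ_j` is an involution in S_j. -/
def InitPatternIsInvolution {k : ℕ} (τ : Equiv.Perm (Fin k)) (j : ℕ) : Prop :=
  ∃ hjk : j ≤ k, ∃ p : Equiv.Perm (Fin j),
    IsPattern (fun m : Fin j => τ (Fin.castLE hjk m)) p ∧ p * p = 1

/-- The j-set of `τ`. -/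
def JSet {k : ℕ} (τ : Equiv.Perm (Fin k)) : Set ℕ :=
  {0} ∪ {j | 1 ≤ j ∧ InitPatternIsInvolution τ j}

open scoped Classical in
/-- The j-set of `τ`, as a finset. -/
noncomputable def JFinset {k : ℕ} (τ : Equiv.Perm (Fin k)) : Finset ℕ :=
  (Finset.range (k + 1)).filter fun j => j ∈ JSet τ

/-- Concatenation of decreasing blocks of consecutive integers starting above `s`. -/
def layersFrom : ℕ → List ℕ → List ℕ
  | _, [] => []
  | s, a :: rest => ((List.range a).reverse.map fun t => s + t + 1) ++ layersFrom (s + a) rest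

/-- `τ` is a layered permutation. -/
def IsLayered {k : ℕ} (τ : Equiv.Perm (Fin k)) : Prop :=
  ∃ comp : List ℕ, (∀ a ∈ comp, 0 < a) ∧ comp.sum = k ∧
    List.ofFn (fun m : Fin k => (τ m : ℕ) + 1) = layersFrom 0 comp

open scoped Classical

/-- value (0-indexed) at position `x` of the layered word with composition `comp`, offset `s`. -/
def layVal : ℕ → List ℕ → ℕ → ℕ
  | s, [], x => s + x
  | s, a :: rest, x => if x < a then s + a - 1 - x else layVal (s + a) rest (x - a)

lemma layVal_shift (s : ℕ) (c : List ℕ) (x : ℕ) : layVal s c x = s + layVal 0 c x := by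
  induction c generalizing s x with
  | nil => simp [layVal]
  | cons a rest ih =>
    by_cases h : x < a
    · simp only [layVal, if_pos h]; omega
    · simp only [layVal, if_neg h]
      rw [ih (s + a), ih (0 + a)]; omega

lemma layVal_cons_ge (s a : ℕ) (rest : List ℕ) {x : ℕ} (h : a ≤ x) :
    layVal s (a :: rest) x = s + a + layVal 0 rest (x - a) := by
  simp only [layVal, if_neg (by omega : ¬ x < a)]
  rw [layVal_shift]

lemma layVal_cons_lt (s a : ℕ) (rest : List ℕ) {x : ℕ} (h : x < a) :
    layVal s (a :: rest) x = s + a - 1 - x := by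
  simp only [layVal, if_pos h]

lemma layVal_lt (c : List ℕ) {x : ℕ} (hx : x < c.sum) : layVal 0 c x < c.sum := by
  induction c generalizing x with
  | nil => simp at hx
  | cons a rest ih =>
    simp only [List.sum_cons] at *
    by_cases h : x < a
    · rw [layVal_cons_lt _ _ _ h]; omega
    · rw [layVal_cons_ge _ _ _ (by omega)]
      have := ih (x := x - a) (by omega)
      omega

lemma layVal_invol (c : List ℕ) {x : ℕ} (hx : x < c.sum) :
    layVal 0 c (layVal 0 c x) = x := by
  induction c generalizing x with
  | nil => simp at hx
  | cons a rest ih =>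
    simp only [List.sum_cons] at hx
    by_cases h : x < a
    · have h1 : layVal 0 (a :: rest) x = a - 1 - x := by
        rw [layVal_cons_lt _ _ _ h]; omega
      rw [h1, layVal_cons_lt _ _ _ (show a - 1 - x < a by omega)]
      omega
    · have hlt : layVal 0 rest (x - a) < rest.sum := layVal_lt rest (by omega)
      rw [layVal_cons_ge _ _ _ (show a ≤ x by omega)]
      set L := layVal 0 rest (x - a) with hL
      rw [layVal_cons_ge _ _ _ (show a ≤ 0 + a + L by omega),
        show 0 + a + L - a = L from by omega, ih (by omega)]
      omega

lemma layVal_append (s : ℕ) (c₁ c₂ : List ℕ) (x : ℕ) :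
    layVal s (c₁ ++ c₂) x =
      if x < c₁.sum then layVal s c₁ x else layVal (s + c₁.sum) c₂ (x - c₁.sum) := by
  induction c₁ generalizing s x with
  | nil => simp [layVal]
  | cons a rest ih =>
    rw [List.cons_append, List.sum_cons]
    by_cases h : x < a
    · rw [layVal_cons_lt _ _ _ h, if_pos (by omega), layVal_cons_lt _ _ _ h]
    · have hL : layVal s (a :: (rest ++ c₂)) x = layVal (s + a) (rest ++ c₂) (x - a) := by
        simp only [layVal, if_neg h]
      rw [hL, ih]
      by_cases h2 : x - a < rest.sum
      · rw [if_pos h2, if_pos (show x < a + rest.sum by omega),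
          show layVal s (a :: rest) x = layVal (s + a) rest (x - a) from by
            simp only [layVal, if_neg h]]
      · rw [if_neg h2, if_neg (show ¬ x < a + rest.sum by omega)]
        congr 1 <;> omega

lemma length_layersFrom (s : ℕ) (c : List ℕ) : (layersFrom s c).length = c.sum := by
  induction c generalizing s with
  | nil => simp [layersFrom]
  | cons a rest ih => simp [layersFrom, ih]

lemma getElem_layersFrom (s : ℕ) (c : List ℕ) (x : ℕ) (hx : x < (layersFrom s c).length) :
    (layersFrom s c)[x] = layVal s c x + 1 := by
  induction c generalizing s x with
  | nil => simp [layersFrom] at hx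
  | cons a rest ih =>
    rw [length_layersFrom, List.sum_cons] at hx
    by_cases h : x < a
    · rw [layVal_cons_lt _ _ _ h]
      simp only [layersFrom]
      rw [List.getElem_append_left (by simpa using h)]
      rw [List.getElem_map, List.getElem_reverse, List.getElem_range]
      · simp only [List.length_reverse, List.length_range]
        omega
    · rw [layVal_cons_ge _ _ _ (by omega), ← layVal_shift]
      simp only [layersFrom]
      rw [List.getElem_append_right (by simpa using h)]
      rw [ih _ _ (by rw [length_layersFrom]; simp; omega)]
      simp

/-- truncation of a composition to total `j`. -/
def trunc : List ℕ → ℕ → List ℕ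
  | [], _ => []
  | a :: rest, j => if j = 0 then [] else if j ≤ a then [j] else a :: trunc rest (j - a)

lemma trunc_sum (c : List ℕ) (j : ℕ) (hj : j ≤ c.sum) : (trunc c j).sum = j := by
  induction c generalizing j with
  | nil => simp_all [trunc]
  | cons a rest ih =>
    simp only [trunc]
    by_cases h0 : j = 0
    · simp [h0]
    · rw [if_neg h0]
      by_cases h : j ≤ a
      · simp [h]
      · rw [if_neg h]
        simp only [List.sum_cons] at hj ⊢
        rw [ih (j - a) (by omega)]
        omega

lemma trunc_pos (c : List ℕ) (j : ℕ) (hc : ∀ a ∈ c, 0 < a) :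
    ∀ a ∈ trunc c j, 0 < a := by
  induction c generalizing j with
  | nil => simp [trunc]
  | cons a rest ih =>
    simp only [trunc]
    by_cases h0 : j = 0
    · simp [h0]
    · rw [if_neg h0]
      by_cases h : j ≤ a
      · rw [if_pos h]; intro b hb; simp at hb; omega
      · rw [if_neg h]
        intro b hb
        rcases List.mem_cons.1 hb with rfl | hb
        · exact hc b List.mem_cons_self
        · exact ih (j - a) (fun x hx => hc x (List.mem_cons_of_mem _ hx)) b hb

/-- order-equivalence of truncated layered word with the full one. -/
lemma trunc_order (c : List ℕ) (j : ℕ) (hj : j ≤ c.sum) {x y : ℕ} (hx : x < j) (hy : y < j) :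
    (layVal 0 (trunc c j) x ≤ layVal 0 (trunc c j) y ↔ layVal 0 c x ≤ layVal 0 c y) := by
  induction c generalizing j x y with
  | nil => simp only [List.sum_nil] at hj; omega
  | cons a rest ih =>
    have h0 : j ≠ 0 := by omega
    simp only [List.sum_cons] at hj
    simp only [trunc, if_neg h0]
    by_cases h : j ≤ a
    · rw [if_pos h]
      rw [layVal_cons_lt _ _ _ (show x < j by omega), layVal_cons_lt _ _ _ (show y < j by omega),
        layVal_cons_lt _ _ _ (show x < a by omega), layVal_cons_lt _ _ _ (show y < a by omega)]
      omega
    · rw [if_neg h]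
      by_cases hxa : x < a <;> by_cases hya : y < a
      · rw [layVal_cons_lt _ _ _ hxa, layVal_cons_lt _ _ _ hya,
          layVal_cons_lt _ _ _ hxa, layVal_cons_lt _ _ _ hya]
      · rw [layVal_cons_lt _ _ _ hxa, layVal_cons_ge _ _ _ (by omega),
          layVal_cons_lt _ _ _ hxa, layVal_cons_ge _ _ _ (by omega)]
        constructor <;> intro _ <;> omega
      · rw [layVal_cons_ge _ _ _ (by omega), layVal_cons_lt _ _ _ hya,
          layVal_cons_ge _ _ _ (by omega), layVal_cons_lt _ _ _ hya]
        constructor <;> intro h' <;> omega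
      · rw [layVal_cons_ge _ _ _ (by omega), layVal_cons_ge _ _ _ (by omega),
          layVal_cons_ge _ _ _ (by omega), layVal_cons_ge _ _ _ (by omega)]
        have := ih (j - a) (by omega) (x := x - a) (y := y - a) (by omega) (by omega)
        omega

@[simp] lemma fin_val_mk {n a : ℕ} (h : a < n) : ((⟨a, h⟩ : Fin n) : ℕ) = a := rfl

def layF {k : ℕ} (c : List ℕ) (hs : c.sum = k) : Fin k → Fin k :=
  fun x => ⟨layVal 0 c x, by
    have h := layVal_lt c (show (x : ℕ) < c.sum by rw [hs]; exact x.2)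
    omega⟩

lemma layF_invol {k : ℕ} (c : List ℕ) (hs : c.sum = k) : Function.Involutive (layF c hs) := by
  intro x
  apply Fin.ext
  show layVal 0 c (layVal 0 c x) = (x : ℕ)
  exact layVal_invol c (by rw [hs]; exact x.2)

def layPerm {k : ℕ} (c : List ℕ) (hs : c.sum = k) : Equiv.Perm (Fin k) :=
  Function.Involutive.toPerm _ (layF_invol c hs)

lemma layPerm_apply_val {k : ℕ} (c : List ℕ) (hs : c.sum = k) (x : Fin k) :
    (layPerm c hs x : ℕ) = layVal 0 c x := rfl

lemma layPerm_mul_self {k : ℕ} (c : List ℕ) (hs : c.sum = k) :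
    layPerm c hs * layPerm c hs = 1 := by
  apply Equiv.ext
  intro x
  rw [Equiv.Perm.mul_apply]
  exact layF_invol c hs x

lemma keyK {j : ℕ} (q : Equiv.Perm (Fin (j + 1))) (hq : q * q = 1)
    (comp : List ℕ) (hpos : ∀ a ∈ comp, 0 < a) (hsum : comp.sum = j)
    (hpat : ∀ a b : Fin j,
      (layVal 0 comp a ≤ layVal 0 comp b ↔ ((q a.castSucc : ℕ) ≤ (q b.castSucc : ℕ)))) :
    ∃ comp' : List ℕ, (∀ a ∈ comp', 0 < a) ∧ comp'.sum = j + 1 ∧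
      ∀ x : Fin (j + 1), (q x : ℕ) = layVal 0 comp' x := by
  have hqq : ∀ x, q (q x) = x := fun x => by
    rw [← Equiv.Perm.mul_apply, hq, Equiv.Perm.one_apply]
  set g : Equiv.Perm (Fin j) := layPerm comp hsum with hg
  set v : ℕ := (q (Fin.last j) : ℕ) with hv
  have hvbound : v < j + 1 := (q (Fin.last j)).2
  have hstar : ∀ a : Fin j, ((q a.castSucc : ℕ)) =
      if layVal 0 comp a < v then layVal 0 comp a else layVal 0 comp a + 1 := by
    set u : Fin j → Fin (j + 1) := fun x => q (g.symm x).castSucc with hu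
    have hginv : ∀ x : Fin j, layVal 0 comp (g.symm x) = (x : ℕ) := by
      intro x
      have h1 : g (g.symm x) = x := g.apply_symm_apply x
      have h2 := congrArg Fin.val h1
      rw [← layPerm_apply_val comp hsum]
      exact h2
    have humono : StrictMono u := by
      apply Monotone.strictMono_of_injective
      · intro x y hxy
        rw [Fin.le_def]
        refine (hpat (g.symm x) (g.symm y)).mp ?_
        rw [hginv, hginv]
        exact hxy
      · intro x y hxy
        exact g.symm.injective (Fin.castSucc_injective _ (q.injective hxy))
    set e : Fin j → Fin (j + 1) :=
      fun x => ⟨if (x : ℕ) < v then (x : ℕ) else (x : ℕ) + 1, by split <;> omega⟩ with he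
    have hemono : StrictMono e := by
      intro x y hxy
      have hxy' : (x : ℕ) < (y : ℕ) := hxy
      simp only [e, Fin.lt_def]
      split <;> split <;> omega
    have hcard : (Finset.univ.erase (q (Fin.last j))).card = j := by
      rw [Finset.card_erase_of_mem (Finset.mem_univ _)]
      simp
    have hus : ∀ x, u x ∈ Finset.univ.erase (q (Fin.last j)) := by
      intro x
      rw [Finset.mem_erase]
      refine ⟨fun hcontra => ?_, Finset.mem_univ _⟩
      exact absurd (q.injective hcontra) (Fin.castSucc_lt_last _).ne
    have hes : ∀ x, e x ∈ Finset.univ.erase (q (Fin.last j)) := by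
      intro x
      rw [Finset.mem_erase]
      refine ⟨fun hcontra => ?_, Finset.mem_univ _⟩
      have h1 := congrArg Fin.val hcontra
      have h2 : (x : ℕ) < j := x.2
      simp only [e, ← hv] at h1
      split at h1 <;> omega
    have h1 := Finset.orderEmbOfFin_unique hcard hus humono
    have h2 := Finset.orderEmbOfFin_unique hcard hes hemono
    have hue : ∀ x, u x = e x := fun x => by rw [congrFun h1 x, ← congrFun h2 x]
    intro a
    have h3 := congrArg Fin.val (hue (g a))
    have h4 : g.symm (g a) = a := g.symm_apply_apply a
    simp only [u, e, h4] at h3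
    rw [h3, layPerm_apply_val comp hsum a]
  by_cases hvj : v = j
  · refine ⟨comp ++ [1], ?_, by simp [hsum], ?_⟩
    · intro a ha
      rcases List.mem_append.1 ha with h | h
      · exact hpos a h
      · simp at h; omega
    · intro x
      by_cases hx : (x : ℕ) < j
      · have hb : layVal 0 comp (x : ℕ) < comp.sum :=
          layVal_lt comp (show (x : ℕ) < comp.sum by omega)
        have h5 := hstar ⟨(x : ℕ), hx⟩
        rw [show (⟨(x : ℕ), hx⟩ : Fin j).castSucc = x from Fin.ext rfl] at h5
        simp only [fin_val_mk] at h5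
        rw [h5, if_pos (by omega), layVal_append, if_pos (by omega)]
      · have hxl : x = Fin.last j := Fin.ext (by have := x.2; simp only [Fin.val_last]; omega)
        rw [hxl, ← hv, layVal_append, if_neg (by simp only [Fin.val_last]; omega),
          layVal_cons_lt _ _ _ (show (Fin.last j : ℕ) - comp.sum < 1 by
            simp only [Fin.val_last]; omega)]
        simp only [Fin.val_last]
        omega
  · have hvlt : v < j := by omega
    obtain ⟨d, b, rfl⟩ := comp.eq_nil_or_concat'.resolve_left
      (by intro h; rw [h] at hsum; simp at hsum; omega)
    have hb0 : 0 < b := hpos b (by simp)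
    have hd : d.sum + b = j := by simpa using hsum
    have hlast : q (Fin.last j) = (⟨v, hvlt⟩ : Fin j).castSucc := Fin.ext (by simp [hv])
    have h2 : (q ((⟨v, hvlt⟩ : Fin j).castSucc) : ℕ) = j := by
      rw [← hlast, hqq]; rfl
    rw [hstar ⟨v, hvlt⟩] at h2
    simp only [fin_val_mk] at h2
    have hlv : layVal 0 (d ++ [b]) v = j - 1 := by
      split at h2 <;> omega
    have hvd : v = d.sum := by
      have hvin : v < (d ++ [b]).sum := by rw [hsum]; exact hvlt
      have hinvv := layVal_invol (d ++ [b]) hvin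
      rw [hlv, layVal_append, if_neg (by omega),
        layVal_cons_lt _ _ _ (show j - 1 - d.sum < b by omega)] at hinvv
      omega
    refine ⟨d ++ [b + 1], ?_, by simp; omega, ?_⟩
    · intro a ha
      rcases List.mem_append.1 ha with h | h
      · exact hpos a (by simp [h])
      · simp at h; omega
    · intro x
      by_cases hx : (x : ℕ) < j
      · have h5 := hstar ⟨(x : ℕ), hx⟩
        rw [show (⟨(x : ℕ), hx⟩ : Fin j).castSucc = x from Fin.ext rfl] at h5
        simp only [fin_val_mk] at h5
        by_cases hxd : (x : ℕ) < d.sum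
        · have h3 : layVal 0 (d ++ [b]) (x : ℕ) = layVal 0 d (x : ℕ) := by
            rw [layVal_append, if_pos hxd]
          have h4 : layVal 0 d (x : ℕ) < d.sum := layVal_lt d hxd
          rw [h5, if_pos (by omega), h3, layVal_append, if_pos hxd]
        · have h3 : layVal 0 (d ++ [b]) (x : ℕ) = 0 + d.sum + b - 1 - ((x : ℕ) - d.sum) := by
            rw [layVal_append, if_neg hxd, layVal_cons_lt _ _ _ (by omega)]
          rw [h5, if_neg (by omega), h3, layVal_append, if_neg hxd,
            layVal_cons_lt _ _ _ (show (x : ℕ) - d.sum < b + 1 by omega)]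
          omega
      · have hxl : x = Fin.last j := Fin.ext (by have := x.2; simp only [Fin.val_last]; omega)
        rw [hxl, ← hv, layVal_append, if_neg (by simp only [Fin.val_last]; omega),
          layVal_cons_lt _ _ _ (show (Fin.last j : ℕ) - d.sum < b + 1 by
            simp only [Fin.val_last]; omega)]
        simp only [Fin.val_last]
        omega

theorem layered_iff_full_jset {k : ℕ} (τ : Equiv.Perm (Fin k)) :
    IsLayered τ ↔ JSet τ = {j | j ≤ k} := by
  constructor
  · intro hL
    obtain ⟨comp, hpos, hsum, hlist⟩ := hL
    have hpt : ∀ x : Fin k, (τ x : ℕ) = layVal 0 comp x := by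
      intro x
      have hlen : (x : ℕ) < (List.ofFn fun m : Fin k => (τ m : ℕ) + 1).length := by simp
      have h1 := List.getElem_of_eq hlist hlen
      rw [List.getElem_ofFn, getElem_layersFrom] at h1
      simpa using h1
    ext j
    simp only [JSet, Set.mem_union, Set.mem_singleton_iff, Set.mem_setOf_eq]
    constructor
    · rintro (rfl | ⟨h1, hjk, _⟩)
      · exact Nat.zero_le k
      · exact hjk
    · intro hjk
      by_cases hj0 : j = 0
      · exact Or.inl hj0
      refine Or.inr ⟨by omega, hjk,
        layPerm (trunc comp j) (trunc_sum comp j (by omega)), ?_, layPerm_mul_self _ _⟩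
      intro a b
      rw [Fin.le_def, Fin.le_def, layPerm_apply_val, layPerm_apply_val,
        trunc_order comp j (by omega) a.2 b.2,
        show (τ (Fin.castLE hjk a) : ℕ) = layVal 0 comp a from hpt _,
        show (τ (Fin.castLE hjk b) : ℕ) = layVal 0 comp b from hpt _]
  · intro hJ
    have H : ∀ j, 1 ≤ j → j ≤ k → InitPatternIsInvolution τ j := by
      intro j h1 h2
      have hmem : j ∈ JSet τ := by rw [hJ]; exact h2
      simp only [JSet, Set.mem_union, Set.mem_singleton_iff, Set.mem_setOf_eq] at hmem
      rcases hmem with h | h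
      · omega
      · exact h.2
    have C : ∀ j, ∀ hj : j ≤ k, ∃ comp : List ℕ, (∀ a ∈ comp, 0 < a) ∧ comp.sum = j ∧
        ∀ a b : Fin j, (layVal 0 comp a ≤ layVal 0 comp b ↔
          (τ (Fin.castLE hj a) : ℕ) ≤ (τ (Fin.castLE hj b) : ℕ)) := by
      intro j
      induction j with
      | zero => exact fun _ => ⟨[], by simp, rfl, fun a => absurd a.2 (by omega)⟩
      | succ j ih =>
        intro hj
        obtain ⟨comp, hpos, hsum, hpat⟩ := ih (by omega)
        obtain ⟨hjk, p, hp, hinv⟩ := H (j + 1) (by omega) hj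
        obtain ⟨comp', hpos', hsum', hval⟩ := keyK p hinv comp hpos hsum (by
          intro a b
          rw [hpat a b]
          have h3 := hp a.castSucc b.castSucc
          rw [Fin.le_def, Fin.le_def] at h3
          exact h3.symm)
        refine ⟨comp', hpos', hsum', fun a b => ?_⟩
        rw [← hval a, ← hval b]
        have h3 := hp a b
        rw [Fin.le_def, Fin.le_def] at h3
        exact h3
    obtain ⟨comp, hpos, hsum, hpat⟩ := C k le_rfl
    set g : Equiv.Perm (Fin k) := layPerm comp hsum with hg
    have hginv : ∀ x : Fin k, layVal 0 comp (g.symm x) = (x : ℕ) := fun x => by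
      rw [← layPerm_apply_val comp hsum]
      exact congrArg Fin.val (g.apply_symm_apply x)
    have hτ : ∀ x : Fin k, (τ x : ℕ) = layVal 0 comp x := by
      have hmono : StrictMono (fun x : Fin k => τ (g.symm x)) := by
        apply Monotone.strictMono_of_injective
        · intro x y hxy
          rw [Fin.le_def]
          have h3 := (hpat (g.symm x) (g.symm y)).mp (by rw [hginv, hginv]; exact hxy)
          exact h3
        · intro x y hxy
          exact g.symm.injective (τ.injective hxy)
      have hcard : (Finset.univ : Finset (Fin k)).card = k := by simp
      have h1 := Finset.orderEmbOfFin_unique hcard (fun x => Finset.mem_univ _) hmono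
      have h2 := Finset.orderEmbOfFin_unique hcard
        (fun x : Fin k => Finset.mem_univ (id x)) strictMono_id
      intro x
      have h3 : τ (g.symm (g x)) = g x := (congrFun h1 (g x)).trans (congrFun h2 (g x)).symm
      rw [g.symm_apply_apply] at h3
      rw [h3, layPerm_apply_val]
    refine ⟨comp, hpos, hsum, ?_⟩
    apply List.ext_getElem
    · simp [length_layersFrom, hsum]
    · intro i h1 h2
      have h3 : i < k := by simpa using h1
      have h4 := hτ ⟨i, h3⟩
      simp only [fin_val_mk] at h4
      rw [List.getElem_ofFn, getElem_layersFrom, h4]
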